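/- Let V be a vector space over ℂ and let φ, ψ : V → ℂ be two ℂ-linear forms. Then the three ℝ-linear forms Re ∘ φ, Im ∘ φ, Re ∘ ψ : V → ℝ are linearly independent over ℝ if and only if φ and ψ are linearly independent over ℂ. -/

import Mathlib

/-!
STATEMENT 8: For a complex vector space V and ℂ-linear forms φ, ψ : V → ℂ, the three
ℝ-linear forms Re∘φ, Im∘φ, Re∘ψ are linearly independent over ℝ if and only if φ and ψ
are linearly independent over ℂ.
-/

private lemma re_zero_of_clinear {V : Type*} [AddCommGroup V] [Module ℂ V]
    (l : V →ₗ[ℂ] ℂ) (h : ∀ v, (l v).re = 0) : l = 0 := by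
  ext v
  have h2 : (l (Complex.I • v)).re = 0 := h _
  rw [l.map_smul, smul_eq_mul, Complex.mul_re, Complex.I_re, Complex.I_im] at h2
  simp only [zero_mul, one_mul, zero_sub, neg_eq_zero] at h2
  exact Complex.ext (h v) h2

theorem re_im_re_linearIndependent_iff
    (V : Type*) [AddCommGroup V] [Module ℂ V] [Module ℝ V] [IsScalarTower ℝ ℂ V]
    (φ ψ : V →ₗ[ℂ] ℂ) :
    LinearIndependent ℝ
      ![Complex.reLm.comp (φ.restrictScalars ℝ),
        Complex.imLm.comp (φ.restrictScalars ℝ),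
        Complex.reLm.comp (ψ.restrictScalars ℝ)] ↔
      LinearIndependent ℂ ![φ, ψ] := by
  constructor
  · intro H
    have HR := Fintype.linearIndependent_iff.mp H
    rw [Fintype.linearIndependent_iff]
    intro g hg
    simp only [Fin.sum_univ_two, Matrix.cons_val_zero, Matrix.cons_val_one,
      Matrix.head_cons] at hg
    by_cases h1 : g 1 = 0
    · by_cases h0 : g 0 = 0
      · intro i; fin_cases i <;> assumption
      · exfalso
        rw [h1, zero_smul, add_zero] at hg
        have hφ : φ = 0 := by
          rcases smul_eq_zero.mp hg with h | h
          · exact absurd h h0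
          · exact h
        have hsum : ∑ i, (![1, 0, 0] : Fin 3 → ℝ) i •
            ![Complex.reLm.comp (φ.restrictScalars ℝ),
              Complex.imLm.comp (φ.restrictScalars ℝ),
              Complex.reLm.comp (ψ.restrictScalars ℝ)] i = 0 := by
          ext v
          simp [Fin.sum_univ_three, hφ]
        exact one_ne_zero (HR ![1, 0, 0] hsum 0)
    · exfalso
      set c : ℂ := -(g 0) / g 1 with hc
      have hψ : ∀ v, ψ v = c * φ v := by
        intro v
        have := LinearMap.congr_fun hg v
        simp only [LinearMap.add_apply, LinearMap.smul_apply, smul_eq_mul,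
          LinearMap.zero_apply] at this
        rw [hc, div_mul_eq_mul_div, eq_div_iff h1]
        linear_combination this
      have hsum : ∑ i, (![-(c.re), c.im, 1] : Fin 3 → ℝ) i •
          ![Complex.reLm.comp (φ.restrictScalars ℝ),
            Complex.imLm.comp (φ.restrictScalars ℝ),
            Complex.reLm.comp (ψ.restrictScalars ℝ)] i = 0 := by
        ext v
        simp only [Fin.sum_univ_three, Matrix.cons_val_zero, Matrix.cons_val_one,
          Matrix.head_cons, Matrix.cons_val_two, Matrix.tail_cons,
          LinearMap.add_apply, LinearMap.smul_apply, LinearMap.comp_apply,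
          LinearMap.restrictScalars_apply, Complex.reLm_coe, Complex.imLm_coe,
          smul_eq_mul, LinearMap.zero_apply, hψ v, Complex.mul_re]
        ring
      exact one_ne_zero (HR ![-(c.re), c.im, 1] hsum 2)
  · intro H
    have HC := Fintype.linearIndependent_iff.mp H
    rw [Fintype.linearIndependent_iff]
    intro g hg
    set z : ℂ := ⟨g 0, -(g 1)⟩ with hz
    set w : ℂ := ((g 2 : ℝ) : ℂ) with hw
    have key : z • φ + w • ψ = 0 := by
      apply re_zero_of_clinear
      intro v
      have hgv := LinearMap.congr_fun hg v
      simp only [Fin.sum_univ_three, Matrix.cons_val_zero, Matrix.cons_val_one,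
        Matrix.head_cons, Matrix.cons_val_two, Matrix.tail_cons,
        LinearMap.add_apply, LinearMap.smul_apply, LinearMap.comp_apply,
        LinearMap.restrictScalars_apply, Complex.reLm_coe, Complex.imLm_coe,
        smul_eq_mul, LinearMap.zero_apply] at hgv
      simp only [LinearMap.add_apply, LinearMap.smul_apply, smul_eq_mul,
        Complex.add_re, Complex.mul_re, hz, hw, Complex.ofReal_re, Complex.ofReal_im]
      linear_combination hgv
    have hsum2 : ∑ i, (![z, w] : Fin 2 → ℂ) i • ![φ, ψ] i = 0 := by
      simpa [Fin.sum_univ_two] using key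
    have h0 := HC ![z, w] hsum2 0
    have h1 := HC ![z, w] hsum2 1
    simp only [Matrix.cons_val_zero, Matrix.cons_val_one, Matrix.head_cons] at h0 h1
    have hg0 : g 0 = 0 := by
      have := congrArg Complex.re h0; simpa [hz] using this
    have hg1 : g 1 = 0 := by
      have := congrArg Complex.im h0; simpa [hz] using this
    have hg2 : g 2 = 0 := by
      exact_mod_cast congrArg Complex.re h1
    intro i; fin_cases i <;> assumption
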